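/- Under λI ⪯ G ⪯ ΛI, the inverse of the block BFGS update satisfies ‖B⁺‖₂ ≤ ‖B‖₂ + Λ, where B⁺ = B + YΔYᵀ − BD(DᵀBD)⁻¹DᵀB, Y = GD, Δ = (DᵀGD)⁻¹. -/

import Mathlib

open Matrix

/-- The spectral (operator 2-) norm of a square real matrix. -/
noncomputable def specNorm {d : ℕ} (A : Matrix (Fin d) (Fin d) ℝ) : ℝ :=
  ‖Matrix.toEuclideanCLM (𝕜 := ℝ) A‖

section Aux

variable {d q : ℕ}

lemma dot_sq_bridge (A : Matrix (Fin d) (Fin d) ℝ) (x : EuclideanSpace ℝ (Fin d)) :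
    (WithLp.equiv 2 _ x) ⬝ᵥ (A *ᵥ (WithLp.equiv 2 _ x)) =
      inner ℝ x (Matrix.toEuclideanCLM (𝕜 := ℝ) A x) := by
  rw [EuclideanSpace.inner_eq_star_dotProduct]
  simp [ofLp_toEuclideanCLM, dotProduct_comm]

lemma norm_sq_eq_dot (x : EuclideanSpace ℝ (Fin d)) :
    ‖x‖ ^ 2 = (WithLp.equiv 2 _ x) ⬝ᵥ (WithLp.equiv 2 _ x) := by
  rw [← real_inner_self_eq_norm_sq, EuclideanSpace.inner_eq_star_dotProduct]
  simp

lemma isSelfAdjoint_toEuclideanCLM {A : Matrix (Fin d) (Fin d) ℝ} (hA : A.IsHermitian) :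
    _root_.IsSelfAdjoint (Matrix.toEuclideanCLM (𝕜 := ℝ) A) := by
  rw [_root_.isSelfAdjoint_iff, ← map_star, Matrix.star_eq_conjTranspose, hA.eq]

lemma specNorm_le_of_psd {A : Matrix (Fin d) (Fin d) ℝ} (hA : A.PosSemidef) {c : ℝ}
    (hc : 0 ≤ c) (h : (c • (1 : Matrix (Fin d) (Fin d) ℝ) - A).PosSemidef) :
    specNorm A ≤ c := by
  classical
  have hsq : (c ^ 2 • (1 : Matrix (Fin d) (Fin d) ℝ) - A * A).PosSemidef := by
    obtain ⟨S, hSh, hS⟩ : ∃ S : Matrix (Fin d) (Fin d) ℝ, Sᴴ = S ∧ S * S = A :=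
      by
        open scoped MatrixOrder in
        exact ⟨CFC.sqrt A, (Matrix.nonneg_iff_posSemidef.mp (CFC.sqrt_nonneg A)).isHermitian.eq,
          CFC.sqrt_mul_sqrt_self A hA.nonneg⟩
    have h1 := h.mul_mul_conjTranspose_same S
    rw [hSh] at h1
    have e : S * (c • (1 : Matrix (Fin d) (Fin d) ℝ) - A) * S
        = c • A - A * A := by
      rw [Matrix.mul_sub, Matrix.sub_mul, Matrix.mul_smul, mul_one, Matrix.smul_mul, hS,
        ← hS]
      simp only [Matrix.mul_assoc]
    rw [e] at h1
    have hsmul : (c • (c • (1 : Matrix (Fin d) (Fin d) ℝ) - A)).PosSemidef := by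
      refine Matrix.PosSemidef.of_dotProduct_mulVec_nonneg ?_ fun x => ?_
      · show _ᴴ = _
        rw [conjTranspose_smul, h.1.eq]
        norm_num
      · rw [Matrix.smul_mulVec, dotProduct_smul, smul_eq_mul]
        exact mul_nonneg hc (h.dotProduct_mulVec_nonneg x)
    have e2 : c ^ 2 • (1 : Matrix (Fin d) (Fin d) ℝ) - A * A
        = (c • A - A * A) + c • (c • (1 : Matrix (Fin d) (Fin d) ℝ) - A) := by
      module
    rw [e2]
    exact h1.add hsmul
  refine ContinuousLinearMap.opNorm_le_bound _ hc fun x => ?_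
  have key := hsq.dotProduct_mulVec_nonneg (WithLp.equiv 2 _ x)
  simp only [star_trivial, Matrix.sub_mulVec, Matrix.smul_mulVec, Matrix.one_mulVec,
    dotProduct_sub, dotProduct_smul, smul_eq_mul, sub_nonneg] at key
  have hAA : (WithLp.equiv 2 _ x) ⬝ᵥ ((A * A) *ᵥ (WithLp.equiv 2 _ x))
      = ‖Matrix.toEuclideanCLM (𝕜 := ℝ) A x‖ ^ 2 := by
    rw [dot_sq_bridge, _root_.map_mul, ContinuousLinearMap.mul_apply,
      ← ContinuousLinearMap.adjoint_inner_left,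
      (isSelfAdjoint_toEuclideanCLM hA.1).adjoint_eq, real_inner_self_eq_norm_sq]
  rw [hAA, ← norm_sq_eq_dot] at key
  have hsq2 : ‖Matrix.toEuclideanCLM (𝕜 := ℝ) A x‖ ^ 2 ≤ (c * ‖x‖) ^ 2 := by
    calc ‖Matrix.toEuclideanCLM (𝕜 := ℝ) A x‖ ^ 2 ≤ c ^ 2 * ‖x‖ ^ 2 := key
    _ = (c * ‖x‖) ^ 2 := by ring
  have h5 := Real.sqrt_le_sqrt hsq2
  rwa [Real.sqrt_sq (norm_nonneg _), Real.sqrt_sq (by positivity)] at h5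

lemma psd_smul_one_sub {A : Matrix (Fin d) (Fin d) ℝ} (hA : A.IsHermitian) :
    (specNorm A • (1 : Matrix (Fin d) (Fin d) ℝ) - A).PosSemidef := by
  refine Matrix.PosSemidef.of_dotProduct_mulVec_nonneg ?_ fun x => ?_
  · show _ᴴ = _
    rw [conjTranspose_sub, conjTranspose_smul, conjTranspose_one, hA.eq, star_trivial]
  · rw [star_trivial, Matrix.sub_mulVec, Matrix.smul_mulVec, Matrix.one_mulVec,
      dotProduct_sub, dotProduct_smul, smul_eq_mul, sub_nonneg]
    have h1 := dot_sq_bridge A ((WithLp.equiv 2 (Fin d → ℝ)).symm x)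
    have h2 := norm_sq_eq_dot ((WithLp.equiv 2 (Fin d → ℝ)).symm x)
    simp only [Equiv.apply_symm_apply] at h1 h2
    rw [h1, ← h2]
    calc inner ℝ ((WithLp.equiv 2 (Fin d → ℝ)).symm x)
          (Matrix.toEuclideanCLM (𝕜 := ℝ) A ((WithLp.equiv 2 (Fin d → ℝ)).symm x))
        ≤ ‖(WithLp.equiv 2 (Fin d → ℝ)).symm x‖ *
          ‖Matrix.toEuclideanCLM (𝕜 := ℝ) A ((WithLp.equiv 2 (Fin d → ℝ)).symm x)‖ :=
        real_inner_le_norm _ _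
      _ ≤ ‖(WithLp.equiv 2 (Fin d → ℝ)).symm x‖ *
          (specNorm A * ‖(WithLp.equiv 2 (Fin d → ℝ)).symm x‖) := by
        refine mul_le_mul_of_nonneg_left ?_ (norm_nonneg _)
        exact ContinuousLinearMap.le_opNorm _ _
      _ = specNorm A * ‖(WithLp.equiv 2 (Fin d → ℝ)).symm x‖ ^ 2 := by ring

lemma specNorm_le_specNorm {A C : Matrix (Fin d) (Fin d) ℝ} (hA : A.PosSemidef)
    (hC : C.IsHermitian) (hAC : (C - A).PosSemidef) : specNorm A ≤ specNorm C := by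
  refine specNorm_le_of_psd hA (norm_nonneg _) ?_
  have h := (psd_smul_one_sub hC).add hAC
  have e : specNorm C • (1 : Matrix (Fin d) (Fin d) ℝ) - A
      = (specNorm C • (1 : Matrix (Fin d) (Fin d) ℝ) - C) + (C - A) := by abel
  rw [e]
  exact h

lemma specNorm_add_le (A B : Matrix (Fin d) (Fin d) ℝ) :
    specNorm (A + B) ≤ specNorm A + specNorm B := by
  unfold specNorm
  rw [map_add]
  exact norm_add_le _ _

lemma mulVec_ne_zero_of_rank (D : Matrix (Fin d) (Fin q) ℝ) (hD : D.rank = q)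
    {x : Fin q → ℝ} (hx : x ≠ 0) : D *ᵥ x ≠ 0 := by
  have hker : LinearMap.ker D.mulVecLin = ⊥ := by
    have h1 := LinearMap.finrank_range_add_finrank_ker D.mulVecLin
    rw [Matrix.rank] at hD
    rw [hD, Module.finrank_fin_fun] at h1
    exact Submodule.finrank_eq_zero.mp (by omega)
  intro h
  apply hx
  have h0 : D.mulVecLin x = D.mulVecLin 0 := by simp [Matrix.mulVecLin_apply, h]
  exact (LinearMap.ker_eq_bot.mp hker) h0

lemma posDef_conj {A : Matrix (Fin d) (Fin d) ℝ} (hA : A.PosDef)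
    (D : Matrix (Fin d) (Fin q) ℝ) (hD : D.rank = q) : (Dᵀ * A * D).PosDef := by
  have hDt : Dᵀ = Dᴴ := (Matrix.conjTranspose_eq_transpose_of_trivial D).symm
  rw [hDt]
  refine Matrix.PosDef.of_dotProduct_mulVec_pos (isHermitian_conjTranspose_mul_mul D hA.1) fun x hx => ?_
  simpa only [star_mulVec, dotProduct_mulVec, vecMul_vecMul] using
    hA.dotProduct_mulVec_pos (mulVec_ne_zero_of_rank D hD hx)

/-- The Schur-complement-style identity: for symmetric positive definite `A`,
`A - A D (DᵀAD)⁻¹ Dᵀ A` is PSD. -/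
lemma schur_psd {A : Matrix (Fin d) (Fin d) ℝ} (hA : A.PosDef)
    (D : Matrix (Fin d) (Fin q) ℝ) (hD : D.rank = q) :
    (A - A * D * (Dᵀ * A * D)⁻¹ * Dᵀ * A).PosSemidef := by
  classical
  set Δ := (Dᵀ * A * D)⁻¹ with hΔdef
  have hDAD := posDef_conj hA D hD
  have hdet : IsUnit (Dᵀ * A * D).det := hDAD.det_pos.ne'.isUnit
  have hmulΔ : (Dᵀ * A * D) * Δ = 1 := Matrix.mul_nonsing_inv _ hdet
  have hΔh : Δ.IsHermitian := hDAD.1.inv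
  have hv : ∀ (Z : Matrix (Fin q) (Fin d) ℝ), Dᵀ * (A * (D * (Δ * Z))) = Z := by
    intro Z
    calc Dᵀ * (A * (D * (Δ * Z))) = ((Dᵀ * A * D) * Δ) * Z := by
          simp only [Matrix.mul_assoc]
      _ = Z := by rw [hmulΔ, Matrix.one_mul]
  have hMh : (1 - D * Δ * Dᵀ * A)ᴴ = 1 - A * D * Δ * Dᵀ := by
    rw [conjTranspose_sub, conjTranspose_one]
    congr 1
    rw [conjTranspose_mul, conjTranspose_mul, conjTranspose_mul, hA.1.eq, hΔh.eq,
      Matrix.conjTranspose_eq_transpose_of_trivial, Matrix.transpose_transpose,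
      Matrix.conjTranspose_eq_transpose_of_trivial]
    simp only [Matrix.mul_assoc]
  have key := hA.posSemidef.conjTranspose_mul_mul_same (1 - D * Δ * Dᵀ * A)
  rw [hMh] at key
  have e : (1 - A * D * Δ * Dᵀ) * A * (1 - D * Δ * Dᵀ * A)
      = A - A * D * Δ * Dᵀ * A := by
    simp only [Matrix.mul_sub, Matrix.sub_mul, mul_one, one_mul, Matrix.mul_assoc]
    rw [hv (Dᵀ * A)]
    abel
  rw [e] at key
  exact key

lemma conj_psd_inv {A : Matrix (Fin d) (Fin d) ℝ} (hA : A.PosDef)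
    (D : Matrix (Fin d) (Fin q) ℝ) (hD : D.rank = q) :
    (A * D * (Dᵀ * A * D)⁻¹ * Dᵀ * A).PosSemidef := by
  classical
  have hDAD := posDef_conj hA D hD
  have hΔpsd : (Dᵀ * A * D)⁻¹.PosSemidef := hDAD.inv.posSemidef
  have key := hΔpsd.conjTranspose_mul_mul_same (Dᵀ * A)
  have hct : (Dᵀ * A)ᴴ = A * D := by
    rw [conjTranspose_mul, hA.1.eq, Matrix.conjTranspose_eq_transpose_of_trivial,
      Matrix.transpose_transpose]
  rw [hct] at key
  have e : A * D * (Dᵀ * A * D)⁻¹ * (Dᵀ * A)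
      = A * D * (Dᵀ * A * D)⁻¹ * Dᵀ * A := by simp only [Matrix.mul_assoc]
  rwa [e] at key

end Aux

/-- Under `λI ⪯ G ⪯ ΛI`, the inverse of the block BFGS update satisfies
`‖B⁺‖₂ ≤ ‖B‖₂ + Λ`, where `B⁺ = B + YΔYᵀ − BD(DᵀBD)⁻¹DᵀB`, `Y = GD`, `Δ = (DᵀGD)⁻¹`. -/
theorem block_bfgs_inverse_norm_bound {d q : ℕ} (lam Lam : ℝ) (hlam : 0 < lam)
    (hll : lam ≤ Lam)
    (B : Matrix (Fin d) (Fin d) ℝ) (hB : B.PosDef)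
    (G : Matrix (Fin d) (Fin d) ℝ) (hGsym : G.IsSymm)
    (hlo : (G - lam • (1 : Matrix (Fin d) (Fin d) ℝ)).PosSemidef)
    (hhi : ((Lam • (1 : Matrix (Fin d) (Fin d) ℝ)) - G).PosSemidef)
    (D : Matrix (Fin d) (Fin q) ℝ) (hD : D.rank = q) :
    let Y := G * D
    let Δ := (Dᵀ * G * D)⁻¹
    specNorm (B + Y * Δ * Yᵀ - B * D * (Dᵀ * B * D)⁻¹ * Dᵀ * B) ≤ specNorm B + Lam := by
  intro Y Δ
  classical
  -- G is positive definite
  have hone : (lam • (1 : Matrix (Fin d) (Fin d) ℝ)).PosDef := by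
    refine Matrix.PosDef.of_dotProduct_mulVec_pos ?_ fun x hx => ?_
    · show _ᴴ = _
      rw [conjTranspose_smul, conjTranspose_one, star_trivial]
    · rw [Matrix.smul_mulVec, Matrix.one_mulVec, dotProduct_smul, smul_eq_mul,
        star_trivial]
      exact mul_pos hlam (Matrix.dotProduct_star_self_pos_iff.mpr hx)
  have hG : G.PosDef := by
    have h := Matrix.PosDef.posSemidef_add hlo hone
    have e : (G - lam • (1 : Matrix (Fin d) (Fin d) ℝ))
        + lam • (1 : Matrix (Fin d) (Fin d) ℝ) = G := by abel
    rwa [e] at h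
  -- S := Y Δ Yᵀ is PSD and bounded by Λ
  have hYt : Y * Δ * Yᵀ = G * D * Δ * Dᵀ * G := by
    show G * D * Δ * (G * D)ᵀ = _
    rw [Matrix.transpose_mul, hGsym.eq]
    simp only [Matrix.mul_assoc]
  have hSpsd : (G * D * Δ * Dᵀ * G).PosSemidef := conj_psd_inv hG D hD
  have hSchur : (G - G * D * Δ * Dᵀ * G).PosSemidef := schur_psd hG D hD
  have hSleLam : specNorm (G * D * Δ * Dᵀ * G) ≤ Lam := by
    refine specNorm_le_of_psd hSpsd (le_trans hlam.le hll) ?_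
    have h := hhi.add hSchur
    have e : Lam • (1 : Matrix (Fin d) (Fin d) ℝ) - G * D * Δ * Dᵀ * G
        = (Lam • (1 : Matrix (Fin d) (Fin d) ℝ) - G) + (G - G * D * Δ * Dᵀ * G) := by abel
    rw [e]
    exact h
  -- T := B - B D (DᵀBD)⁻¹ Dᵀ B is PSD and bounded by ‖B‖
  have hTpsd : (B - B * D * (Dᵀ * B * D)⁻¹ * Dᵀ * B).PosSemidef := schur_psd hB D hD
  have hBmT : (B - (B - B * D * (Dᵀ * B * D)⁻¹ * Dᵀ * B)).PosSemidef := by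
    have h := conj_psd_inv hB D hD
    have e : B - (B - B * D * (Dᵀ * B * D)⁻¹ * Dᵀ * B)
        = B * D * (Dᵀ * B * D)⁻¹ * Dᵀ * B := by abel
    rwa [e]
  have hTle : specNorm (B - B * D * (Dᵀ * B * D)⁻¹ * Dᵀ * B) ≤ specNorm B :=
    specNorm_le_specNorm hTpsd hB.1 hBmT
  -- assemble
  have hsplit : B + Y * Δ * Yᵀ - B * D * (Dᵀ * B * D)⁻¹ * Dᵀ * B
      = (B - B * D * (Dᵀ * B * D)⁻¹ * Dᵀ * B) + G * D * Δ * Dᵀ * G := by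
    rw [hYt]
    abel
  rw [hsplit]
  calc specNorm ((B - B * D * (Dᵀ * B * D)⁻¹ * Dᵀ * B) + G * D * Δ * Dᵀ * G)
      ≤ specNorm (B - B * D * (Dᵀ * B * D)⁻¹ * Dᵀ * B)
        + specNorm (G * D * Δ * Dᵀ * G) := specNorm_add_le _ _
    _ ≤ specNorm B + Lam := add_le_add hTle hSleLam
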